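/- Let T be a densely defined symmetric operator in a Hilbert space H and let (u_α)_{α∈I} be an orthonormal basis of H with u_α ∈ D(T) for all α and ∑_{α∈I} ‖T u_α‖² < ∞. Then T is bounded on D(T), with ‖T u‖ ≤ ‖u‖·(∑_{α∈I} ‖T u_α‖²)^{1/2} for all u ∈ D(T); consequently T extends to a bounded operator on H of norm at most (∑_{α∈I} ‖T u_α‖²)^{1/2}. -/

import Mathlib

open Filter Topology
open scoped ComplexInnerProductSpace

lemma hasSum_norm_inner_sq_aux {H ι : Type*} [NormedAddCommGroup H] [InnerProductSpace ℂ H]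
    [CompleteSpace H] (b : HilbertBasis ι ℂ H) (x : H) :
    HasSum (fun i => ‖⟪b i, x⟫‖ ^ 2) (‖x‖ ^ 2) := by
  have h := b.hasSum_inner_mul_inner x x
  have h2 : ∀ i, ⟪x, b i⟫ * ⟪b i, x⟫ = ((‖⟪b i, x⟫‖ ^ 2 : ℝ) : ℂ) := by
    intro i
    rw [← inner_conj_symm x (b i), RCLike.conj_mul]
    norm_cast
  simp only [h2] at h
  rw [inner_self_eq_norm_sq_to_K] at h
  norm_cast at h
  simpa using Complex.hasSum_ofReal.mp h

/-- **A symmetric operator that is Hilbert–Schmidt on an orthonormal basis is bounded.**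
Let `T` be a densely defined symmetric operator in a Hilbert space `H` and `(u_α)` an
orthonormal basis with `u_α ∈ D(T)` and `∑ ‖T u_α‖² < ∞`.  Then
`‖Tu‖ ≤ ‖u‖ (∑ ‖T u_α‖²)^{1/2}` on `D(T)`, and `T` extends to a bounded operator on `H` of
norm at most `(∑ ‖T u_α‖²)^{1/2}`. -/
theorem symmetric_operator_bounded_of_summable_on_basis
    {H ι : Type*} [NormedAddCommGroup H] [InnerProductSpace ℂ H] [CompleteSpace H]
    (T : H →ₗ.[ℂ] H) (hdense : Dense (T.domain : Set H))
    (hsymm : ∀ u v : T.domain, ⟪T u, (v : H)⟫ = ⟪(u : H), T v⟫)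
    (b : HilbertBasis ι ℂ H) (hb : ∀ i, b i ∈ T.domain)
    (hsum : Summable fun i => ‖T ⟨b i, hb i⟩‖ ^ 2) :
    (∀ u : T.domain, ‖T u‖ ≤ ‖(u : H)‖ * Real.sqrt (∑' i, ‖T ⟨b i, hb i⟩‖ ^ 2)) ∧
    ∃ S : H →L[ℂ] H, (∀ u : T.domain, S u = T u) ∧
      ‖S‖ ≤ Real.sqrt (∑' i, ‖T ⟨b i, hb i⟩‖ ^ 2) := by
  set M := Real.sqrt (∑' i, ‖T ⟨b i, hb i⟩‖ ^ 2) with hM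
  have key : ∀ u : T.domain, ‖T u‖ ≤ ‖(u : H)‖ * M := by
    intro u
    have h1 : HasSum (fun i => ‖⟪b i, T u⟫‖ ^ 2) (‖T u‖ ^ 2) :=
      hasSum_norm_inner_sq_aux b (T u)
    have h2 : ∀ i, ‖⟪b i, T u⟫‖ ^ 2 ≤ ‖T ⟨b i, hb i⟩‖ ^ 2 * ‖(u : H)‖ ^ 2 := by
      intro i
      have : ⟪b i, T u⟫ = ⟪T ⟨b i, hb i⟩, (u : H)⟫ := (hsymm ⟨b i, hb i⟩ u).symm
      rw [this, ← mul_pow]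
      exact pow_le_pow_left₀ (norm_nonneg _) (norm_inner_le_norm _ _) 2
    have h3 : ‖T u‖ ^ 2 ≤ (∑' i, ‖T ⟨b i, hb i⟩‖ ^ 2) * ‖(u : H)‖ ^ 2 := by
      rw [← h1.tsum_eq, ← tsum_mul_right]
      exact Summable.tsum_le_tsum h2 h1.summable (hsum.mul_right _)
    have h4 : ‖T u‖ ≤ Real.sqrt ((∑' i, ‖T ⟨b i, hb i⟩‖ ^ 2) * ‖(u : H)‖ ^ 2) := by
      rw [← Real.sqrt_sq (norm_nonneg (T u))]
      exact Real.sqrt_le_sqrt h3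
    rw [Real.sqrt_mul (tsum_nonneg fun i => sq_nonneg _), Real.sqrt_sq (norm_nonneg _)] at h4
    linarith [h4]
  refine ⟨key, ?_⟩
  have hM0 : 0 ≤ M := Real.sqrt_nonneg _
  set f : T.domain →L[ℂ] H := T.toFun.mkContinuous M (fun u => by
    simpa [mul_comm] using key u) with hf
  have hfnorm : ‖f‖ ≤ M := T.toFun.mkContinuous_norm_le hM0 _
  refine ⟨f.extend (Submodule.subtypeL T.domain), fun u => ?_, ?_⟩
  · exact ContinuousLinearMap.extend_eq _ hdense.denseRange_val
      isUniformEmbedding_subtype_val.isUniformInducing u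
  · have := ContinuousLinearMap.opNorm_extend_le f (e := Submodule.subtypeL T.domain)
      hdense.denseRange_val (N := 1) (fun x => by simp)
    refine le_trans ?_ hfnorm
    simpa using this
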